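/- Suppose additionally that diam(C) ≤ 1. Then the Krasnosel'skii–Mann iterates satisfy ‖x_m − x_n‖ ≤ c_{m,n} for all 0 ≤ m ≤ n. -/

import Mathlib

open Finset

noncomputable def kmPi (α : ℕ → ℝ) (k n : ℕ) : ℝ :=
  α k * ∏ i ∈ Finset.Icc (k+1) n, (1 - α i)

lemma kmPi_nonneg {α : ℕ → ℝ} (hα : ∀ k, α k ∈ Set.Icc (0:ℝ) 1) (k n : ℕ) :
    0 ≤ kmPi α k n :=
  mul_nonneg (hα k).1 (Finset.prod_nonneg fun i _ => by linarith [(hα i).2])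

lemma kmPi_self (α : ℕ → ℝ) (k : ℕ) : kmPi α k k = α k := by
  rw [kmPi, Finset.Icc_eq_empty (by omega), Finset.prod_empty, mul_one]

lemma kmPi_succ (α : ℕ → ℝ) {k n : ℕ} (h : k ≤ n) :
    kmPi α k (n+1) = kmPi α k n * (1 - α (n+1)) := by
  rw [kmPi, kmPi, Finset.prod_Icc_succ_top (by omega : k+1 ≤ n+1), mul_assoc]

lemma kmPi_sum {α : ℕ → ℝ} (hα0 : α 0 = 1) (m : ℕ) :
    ∑ j ∈ Finset.range (m+1), kmPi α j m = 1 := by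
  induction m with
  | zero => simp [kmPi_self, hα0]
  | succ m ih =>
    rw [Finset.sum_range_succ, kmPi_self]
    have : ∀ j ∈ Finset.range (m+1), kmPi α j (m+1) = kmPi α j m * (1 - α (m+1)) := by
      intro j hj
      exact kmPi_succ α (by simpa [Nat.lt_succ_iff] using Finset.mem_range.mp hj)
    rw [Finset.sum_congr rfl this, ← Finset.sum_mul, ih]
    ring

lemma kmPi_prod_add_sum {α : ℕ → ℝ} {m : ℕ} : ∀ n, m ≤ n →
    (∏ j ∈ Finset.Icc (m+1) n, (1 - α j)) + ∑ k ∈ Finset.Icc (m+1) n, kmPi α k n = 1 := by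
  intro n hn
  induction n, hn using Nat.le_induction with
  | base => rw [Finset.Icc_eq_empty (by omega)]; simp
  | succ n hn ih =>
    rw [Finset.prod_Icc_succ_top (by omega : m+1 ≤ n+1),
        Finset.sum_Icc_succ_top (by omega : m+1 ≤ n+1), kmPi_self]
    have : ∀ k ∈ Finset.Icc (m+1) n, kmPi α k (n+1) = kmPi α k n * (1 - α (n+1)) := by
      intro k hk
      exact kmPi_succ α (Finset.mem_Icc.mp hk).2
    rw [Finset.sum_congr rfl this, ← Finset.sum_mul]
    linear_combination (1 - α (n+1)) * ih

theorem km_recursive_bound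
    {X : Type*} [NormedAddCommGroup X] [NormedSpace ℝ X]
    (C : Set X) (hCne : C.Nonempty) (hCconv : Convex ℝ C)
    (hCbdd : Bornology.IsBounded C) (hCdiam : Metric.diam C ≤ 1)
    (T : X → X) (hTmaps : Set.MapsTo T C C)
    (hT : ∀ x ∈ C, ∀ y ∈ C, ‖T x - T y‖ ≤ ‖x - y‖)
    (α : ℕ → ℝ) (hα0 : α 0 = 1) (hα : ∀ k, α k ∈ Set.Icc (0:ℝ) 1)
    (x : ℕ → X) (hx0 : x 0 ∈ C)
    (hx : ∀ k, x (k + 1) = (1 - α (k + 1)) • x k + α (k + 1) • T (x k))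
    (c : ℤ → ℤ → ℝ)
    (hc1 : ∀ n : ℕ, c (-1) n = 1)
    (hcr : ∀ m n : ℕ, m ≤ n →
      c m n = ∑ j ∈ Finset.range (m + 1), ∑ k ∈ Finset.Icc (m + 1) n,
        (α j * ∏ i ∈ Finset.Icc (j + 1) m, (1 - α i)) *
          (α k * ∏ i ∈ Finset.Icc (k + 1) n, (1 - α i)) *
            c ((j : ℤ) - 1) ((k : ℤ) - 1))
    (m n : ℕ) (hmn : m ≤ n) :
    ‖x m - x n‖ ≤ c m n := by
  -- iterates stay in C
  have hxC : ∀ k, x k ∈ C := by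
    intro k
    induction k with
    | zero => exact hx0
    | succ k ih =>
      rw [hx k]
      exact hCconv ih (hTmaps ih) (by linarith [(hα (k+1)).2]) (hα (k+1)).1 (by ring)
  -- the "virtual" points y_j
  set y : ℕ → X := fun j => if j = 0 then x 0 else T (x (j-1)) with hy
  have hyC : ∀ j, y j ∈ C := by
    intro j
    cases j with
    | zero => simpa [hy] using hx0
    | succ j => simpa [hy] using hTmaps (hxC j)
  -- representation of x_m as convex combination of the y_j
  have hrepr : ∀ m, x m = ∑ j ∈ Finset.range (m+1), kmPi α j m • y j := by
    intro m
    induction m with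
    | zero => simp [kmPi_self, hα0, hy]
    | succ m ih =>
      rw [hx m, Finset.sum_range_succ, kmPi_self]
      have h1 : ∀ j ∈ Finset.range (m+1),
          kmPi α j (m+1) • y j = (1 - α (m+1)) • (kmPi α j m • y j) := by
        intro j hj
        rw [kmPi_succ α (by simpa [Nat.lt_succ_iff] using Finset.mem_range.mp hj),
          mul_comm, mul_smul]
      rw [Finset.sum_congr rfl h1, ← Finset.smul_sum, ← ih]
      have : y (m+1) = T (x m) := by simp [hy]
      rw [this]
  -- strong induction on m
  revert hmn
  induction m using Nat.strong_induction_on generalizing n with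
  | _ m IH =>
  intro hmn
  -- representation of x_n relative to x_m
  have hrepr2 : ∀ n, m ≤ n → x n = (∏ j ∈ Finset.Icc (m+1) n, (1 - α j)) • x m +
      ∑ k ∈ Finset.Icc (m+1) n, kmPi α k n • T (x (k-1)) := by
    intro n hn
    induction n, hn using Nat.le_induction with
    | base => rw [Finset.Icc_eq_empty (by omega)]; simp
    | succ n hn ih =>
      rw [hx n]
      nth_rewrite 1 [ih]
      rw [Finset.prod_Icc_succ_top (by omega : m+1 ≤ n+1),
        Finset.sum_Icc_succ_top (by omega : m+1 ≤ n+1), kmPi_self]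
      have h1 : ∀ k ∈ Finset.Icc (m+1) n,
          kmPi α k (n+1) • T (x (k-1)) = (1 - α (n+1)) • (kmPi α k n • T (x (k-1))) := by
        intro k hk
        rw [kmPi_succ α (Finset.mem_Icc.mp hk).2, mul_comm, mul_smul]
      rw [Finset.sum_congr rfl h1, ← Finset.smul_sum]
      simp only [Nat.add_sub_cancel]
      rw [smul_add, smul_smul, mul_comm]
      abel
  -- main decomposition
  have hps := kmPi_prod_add_sum (α := α) (m := m) n hmn
  have hdecomp : x m - x n = ∑ k ∈ Finset.Icc (m+1) n, ∑ j ∈ Finset.range (m+1),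
      (kmPi α k n * kmPi α j m) • (y j - T (x (k-1))) := by
    have e1 : ∀ k ∈ Finset.Icc (m+1) n, ∑ j ∈ Finset.range (m+1),
        (kmPi α k n * kmPi α j m) • (y j - T (x (k-1)))
          = kmPi α k n • (x m - T (x (k-1))) := by
      intro k hk
      have : ∑ j ∈ Finset.range (m+1), (kmPi α k n * kmPi α j m) • (y j - T (x (k-1)))
          = kmPi α k n • ∑ j ∈ Finset.range (m+1), kmPi α j m • (y j - T (x (k-1))) := by
        rw [Finset.smul_sum]
        exact Finset.sum_congr rfl fun j _ => by rw [mul_smul]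
      rw [this]
      congr 1
      have : ∑ j ∈ Finset.range (m+1), kmPi α j m • (y j - T (x (k-1)))
          = (∑ j ∈ Finset.range (m+1), kmPi α j m • y j)
            - (∑ j ∈ Finset.range (m+1), kmPi α j m) • T (x (k-1)) := by
        rw [Finset.sum_smul, ← Finset.sum_sub_distrib]
        exact Finset.sum_congr rfl fun j _ => by rw [smul_sub]
      rw [this, kmPi_sum hα0, ← hrepr, one_smul]
    rw [Finset.sum_congr rfl e1]
    have : ∑ k ∈ Finset.Icc (m+1) n, kmPi α k n • (x m - T (x (k-1)))
        = (∑ k ∈ Finset.Icc (m+1) n, kmPi α k n) • x m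
          - ∑ k ∈ Finset.Icc (m+1) n, kmPi α k n • T (x (k-1)) := by
      rw [Finset.sum_smul, ← Finset.sum_sub_distrib]
      exact Finset.sum_congr rfl fun k _ => by rw [smul_sub]
    rw [this, hrepr2 n hmn]
    have hS : (∑ k ∈ Finset.Icc (m+1) n, kmPi α k n)
        = 1 - ∏ j ∈ Finset.Icc (m+1) n, (1 - α j) := by linarith
    rw [hS, sub_smul, one_smul]
    abel
  -- termwise bound
  have hterm : ∀ j ∈ Finset.range (m+1), ∀ k ∈ Finset.Icc (m+1) n,
      ‖y j - T (x (k-1))‖ ≤ c ((j:ℤ) - 1) ((k:ℤ) - 1) := by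
    intro j hj k hk
    have hk1 : m + 1 ≤ k := (Finset.mem_Icc.mp hk).1
    have hkcast : ((k:ℤ) - 1) = ((k-1 : ℕ) : ℤ) := by
      have : 1 ≤ k := by omega
      push_cast [this]
      ring
    cases j with
    | zero =>
      have : ‖y 0 - T (x (k-1))‖ ≤ Metric.diam C := by
        rw [← dist_eq_norm]
        exact Metric.dist_le_diam_of_mem hCbdd (hyC 0) (hTmaps (hxC (k-1)))
      rw [hkcast]
      calc ‖y 0 - T (x (k-1))‖ ≤ 1 := le_trans this hCdiam
        _ = c (-1) ((k-1:ℕ)) := (hc1 (k-1)).symm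
        _ = c ((0:ℕ) - 1) ((k-1:ℕ)) := by norm_num
    | succ j =>
      have hjm : j < m := by
        have := Finset.mem_range.mp hj; omega
      have h1 : ‖y (j+1) - T (x (k-1))‖ ≤ ‖x j - x (k-1)‖ := by
        have : y (j+1) = T (x j) := by simp [hy]
        rw [this]
        exact hT _ (hxC j) _ (hxC (k-1))
      have hcast : ((j+1:ℕ):ℤ) - 1 = (j:ℤ) := by push_cast; ring
      rw [hcast, hkcast]
      exact le_trans h1 (IH j hjm (k-1) (by omega))
  -- rewrite the recursion in terms of kmPi
  have hcr' : c m n = ∑ j ∈ Finset.range (m + 1), ∑ k ∈ Finset.Icc (m + 1) n,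
      kmPi α j m * kmPi α k n * c ((j : ℤ) - 1) ((k : ℤ) - 1) := hcr m n hmn
  -- bound the inner sums
  have step : ∀ k ∈ Finset.Icc (m+1) n,
      ‖∑ j ∈ Finset.range (m+1), (kmPi α k n * kmPi α j m) • (y j - T (x (k-1)))‖
        ≤ ∑ j ∈ Finset.range (m+1), kmPi α j m * kmPi α k n * c ((j:ℤ)-1) ((k:ℤ)-1) := by
    intro k hk
    refine le_trans (norm_sum_le _ _) (Finset.sum_le_sum ?_)
    intro j hj
    have hnn : 0 ≤ kmPi α k n * kmPi α j m :=
      mul_nonneg (kmPi_nonneg hα k n) (kmPi_nonneg hα j m)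
    rw [norm_smul, Real.norm_eq_abs, abs_of_nonneg hnn]
    calc kmPi α k n * kmPi α j m * ‖y j - T (x (k-1))‖
        ≤ kmPi α k n * kmPi α j m * c ((j:ℤ)-1) ((k:ℤ)-1) :=
          mul_le_mul_of_nonneg_left (hterm j hj k hk) hnn
      _ = kmPi α j m * kmPi α k n * c ((j:ℤ)-1) ((k:ℤ)-1) := by ring
  calc ‖x m - x n‖
      = ‖∑ k ∈ Finset.Icc (m+1) n, ∑ j ∈ Finset.range (m+1),
          (kmPi α k n * kmPi α j m) • (y j - T (x (k-1)))‖ := by rw [hdecomp]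
    _ ≤ ∑ k ∈ Finset.Icc (m+1) n, ‖∑ j ∈ Finset.range (m+1),
          (kmPi α k n * kmPi α j m) • (y j - T (x (k-1)))‖ := norm_sum_le _ _
    _ ≤ ∑ k ∈ Finset.Icc (m+1) n, ∑ j ∈ Finset.range (m+1),
          kmPi α j m * kmPi α k n * c ((j:ℤ)-1) ((k:ℤ)-1) := Finset.sum_le_sum step
    _ = ∑ j ∈ Finset.range (m+1), ∑ k ∈ Finset.Icc (m+1) n,
          kmPi α j m * kmPi α k n * c ((j:ℤ)-1) ((k:ℤ)-1) := Finset.sum_comm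
    _ = c m n := hcr'.symm
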